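/- arXiv:1212.0115 — 4 statements merged into one kernel-verified Lean document; each statement's English description precedes it below -/
import Mathlib

section
/- Let G₂ ⊊ ℝⁿ be a domain and let G₁ ⊂ G₂ be a bounded subdomain (nonempty, open, connected, containing at least two points). Set c = 1 + 2·dist(G₁, ∂G₂)/diam(G₁). Then for all x, y ∈ G₁, k_{G₁}(x,y) ≥ c · k_{G₂}(x,y). -/
open Set Metric

/-- The Euclidean distance from a point to the boundary of `G`. -/
noncomputable def bdist {n : ℕ} (G : Set (EuclideanSpace ℝ (Fin n)))
    (x : EuclideanSpace ℝ (Fin n)) : ℝ :=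
  Metric.infDist x (frontier G)

/-- The quasihyperbolic length of a path `γ` (parametrized on `[0,1]`) in `G`. -/
noncomputable def qhLength {n : ℕ} (G : Set (EuclideanSpace ℝ (Fin n)))
    (γ : ℝ → EuclideanSpace ℝ (Fin n)) : ℝ :=
  ∫ t in (0:ℝ)..1, ‖deriv γ t‖ / bdist G (γ t)

/-- The quasihyperbolic metric of `G`: the infimum of quasihyperbolic lengths of
paths joining `x` and `y` inside `G`. -/
noncomputable def qhDist {n : ℕ} (G : Set (EuclideanSpace ℝ (Fin n)))
    (x y : EuclideanSpace ℝ (Fin n)) : ℝ :=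
  ⨅ γ : {γ : ℝ → EuclideanSpace ℝ (Fin n) // γ 0 = x ∧ γ 1 = y ∧
      (∀ t ∈ Set.Icc (0:ℝ) 1, γ t ∈ G) ∧ ContDiffOn ℝ 1 γ (Set.Icc 0 1)},
    qhLength G γ.1

/-- The distance ratio metric of `G`. -/
noncomputable def jDist {n : ℕ} (G : Set (EuclideanSpace ℝ (Fin n)))
    (x y : EuclideanSpace ℝ (Fin n)) : ℝ :=
  Real.log (1 + dist x y / min (bdist G x) (bdist G y))

/-- The distance between two sets: the infimum of distances between their points. -/
noncomputable def setDist {n : ℕ} (A B : Set (EuclideanSpace ℝ (Fin n))) : ℝ :=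
  sInf (Set.image2 dist A B)

section Aux

variable {E : Type*} [NormedAddCommGroup E] [NormedSpace ℝ E]

/-- A preconnected set meeting both an open set and its complement meets the frontier. -/
lemma aux_frontier_cross {X : Type*} [TopologicalSpace X] {s t : Set X}
    (ht : IsOpen t) (hs : IsPreconnected s) (h1 : (s ∩ t).Nonempty)
    (h2 : (s \ t).Nonempty) : (s ∩ frontier t).Nonempty := by
  by_contra hno
  rw [Set.not_nonempty_iff_eq_empty] at hno
  have hcover : s ⊆ t ∪ (closure t)ᶜ := by
    intro p hp
    by_cases hpc : p ∈ closure t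
    · left
      by_contra hpt
      have hpfr : p ∈ frontier t := by
        rw [ht.frontier_eq]
        exact ⟨hpc, hpt⟩
      exact absurd (Set.mem_inter hp hpfr) (by rw [hno]; exact Set.notMem_empty p)
    · right; exact hpc
  have h2' : (s ∩ (closure t)ᶜ).Nonempty := by
    obtain ⟨w, hws, hwt⟩ := h2
    refine ⟨w, hws, ?_⟩
    intro hwc
    have hwfr : w ∈ frontier t := by
      rw [ht.frontier_eq]; exact ⟨hwc, hwt⟩
    exact absurd (Set.mem_inter hws hwfr) (by rw [hno]; exact Set.notMem_empty w)
  obtain ⟨p, hps, hpt, hpc⟩ := hs t (closure t)ᶜ ht isClosed_closure.isOpen_compl hcover h1 h2'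
  exact hpc (subset_closure hpt)

/-- Existence of a `C¹` path joining two points, entirely inside `G`. -/
def Adm' (G : Set E) (x y : E) : Prop :=
  ∃ γ : ℝ → E, ContDiff ℝ 1 γ ∧ γ 0 = x ∧ γ 1 = y ∧ ∀ t, γ t ∈ G

lemma adm'_refl {G : Set E} {x : E} (h : x ∈ G) : Adm' G x x :=
  ⟨fun _ => x, contDiff_const, rfl, rfl, fun _ => h⟩

lemma adm'_segment {G C : Set E} {x y : E} (hC : Convex ℝ C) (hCG : C ⊆ G)
    (hx : x ∈ C) (hy : y ∈ C) : Adm' G x y := by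
  refine ⟨fun t => (1 - Real.smoothTransition t) • x + Real.smoothTransition t • y,
    ((contDiff_const.sub Real.smoothTransition.contDiff).smul contDiff_const).add
      (Real.smoothTransition.contDiff.smul contDiff_const), ?_, ?_, ?_⟩
  · simp [Real.smoothTransition.zero_of_nonpos le_rfl]
  · simp [Real.smoothTransition.one_of_one_le le_rfl]
  · intro t
    exact hCG (hC hx hy (by linarith [Real.smoothTransition.le_one t])
      (Real.smoothTransition.nonneg t) (by ring))

lemma adm'_flat {G : Set E} {x y : E} (h : Adm' G x y) :
    ∃ γ : ℝ → E, ContDiff ℝ 1 γ ∧ (∀ t, t ≤ (1/4:ℝ) → γ t = x) ∧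
      (∀ t, (3/4:ℝ) ≤ t → γ t = y) ∧ ∀ t, γ t ∈ G := by
  obtain ⟨γ, hsm, h0, h1, hmem⟩ := h
  refine ⟨fun t => γ (Real.smoothTransition (2 * t - 1/2)),
    hsm.comp (Real.smoothTransition.contDiff.comp (by fun_prop)), ?_, ?_, fun t => hmem _⟩
  · intro t ht
    have : Real.smoothTransition (2 * t - 1/2) = 0 :=
      Real.smoothTransition.zero_of_nonpos (by linarith)
    simp only [this, h0]
  · intro t ht
    have : Real.smoothTransition (2 * t - 1/2) = 1 :=
      Real.smoothTransition.one_of_one_le (by linarith)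
    simp only [this, h1]

lemma adm'_trans {G : Set E} {x y z : E} (hxy : Adm' G x y) (hyz : Adm' G y z) :
    Adm' G x z := by
  obtain ⟨γ₁, hsm₁, h₁l, h₁r, hmem₁⟩ := adm'_flat hxy
  obtain ⟨γ₂, hsm₂, h₂l, h₂r, hmem₂⟩ := adm'_flat hyz
  refine ⟨fun t => if t < 1/2 then γ₁ (2 * t) else γ₂ (2 * t - 1), ?_, ?_, ?_, ?_⟩
  · rw [contDiff_iff_contDiffAt]
    intro t
    rcases lt_trichotomy t (1/2) with hlt | heq | hgt
    · refine ((hsm₁.comp (by fun_prop : ContDiff ℝ 1 (fun u : ℝ => 2 * u))).contDiffAt).congr_of_eventuallyEq ?_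
      filter_upwards [isOpen_Iio.mem_nhds (show t ∈ Iio (1/2:ℝ) from hlt)] with u hu
      simp only [Function.comp]
      exact if_pos hu
    · refine (contDiffAt_const (c := y)).congr_of_eventuallyEq ?_
      have hmem : Ioo (3/8:ℝ) (5/8) ∈ nhds t := isOpen_Ioo.mem_nhds (by rw [heq]; constructor <;> norm_num)
      filter_upwards [hmem] with u hu
      show (if u < 1/2 then γ₁ (2 * u) else γ₂ (2 * u - 1)) = y
      by_cases huc : u < 1/2
      · rw [if_pos huc]
        exact h₁r _ (by linarith [hu.1])
      · rw [if_neg huc]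
        exact h₂l _ (by push_neg at huc; linarith [hu.2])
    · refine ((hsm₂.comp (by fun_prop : ContDiff ℝ 1 (fun u : ℝ => 2 * u - 1))).contDiffAt).congr_of_eventuallyEq ?_
      filter_upwards [isOpen_Ioi.mem_nhds (show t ∈ Ioi (1/2:ℝ) from hgt)] with u hu
      simp only [Function.comp]
      exact if_neg (not_lt.mpr (le_of_lt hu))
  · show (if (0:ℝ) < 1/2 then γ₁ (2 * 0) else γ₂ (2 * 0 - 1)) = x
    rw [if_pos (by norm_num : (0:ℝ) < 1/2)]
    exact h₁l _ (by norm_num)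
  · show (if (1:ℝ) < 1/2 then γ₁ (2 * 1) else γ₂ (2 * 1 - 1)) = z
    rw [if_neg (by norm_num : ¬ (1:ℝ) < 1/2)]
    exact h₂r _ (by norm_num)
  · intro t
    show (if t < 1/2 then γ₁ (2 * t) else γ₂ (2 * t - 1)) ∈ G
    by_cases ht : t < 1/2
    · rw [if_pos ht]; exact hmem₁ _
    · rw [if_neg ht]; exact hmem₂ _

lemma adm'_of_connected {G : Set E} (hG : IsOpen G) (hc : IsPreconnected G)
    {x y : E} (hx : x ∈ G) (hy : y ∈ G) : Adm' G x y := by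
  by_contra hAdm
  set S : Set E := {z | z ∈ G ∧ Adm' G x z} with hS_def
  set T : Set E := {z | z ∈ G ∧ ¬ Adm' G x z} with hT_def
  have hS : IsOpen S := by
    rw [Metric.isOpen_iff]
    rintro z ⟨hzG, hzA⟩
    obtain ⟨ε, hε, hball⟩ := Metric.isOpen_iff.1 hG z hzG
    refine ⟨ε, hε, fun w hw => ⟨hball hw, adm'_trans hzA (adm'_segment (convex_ball z ε) hball
      (mem_ball_self hε) hw)⟩⟩
  have hT : IsOpen T := by
    rw [Metric.isOpen_iff]
    rintro z ⟨hzG, hzA⟩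
    obtain ⟨ε, hε, hball⟩ := Metric.isOpen_iff.1 hG z hzG
    refine ⟨ε, hε, fun w hw => ⟨hball hw, fun hA => hzA (adm'_trans hA (adm'_segment
      (convex_ball z ε) hball hw (mem_ball_self hε)))⟩⟩
  have hcover : G ⊆ S ∪ T := by
    intro p hp
    by_cases h : Adm' G x p
    · exact Or.inl ⟨hp, h⟩
    · exact Or.inr ⟨hp, h⟩
  obtain ⟨p, _, ⟨_, hp1⟩, ⟨_, hp2⟩⟩ := hc S T hS hT hcover
    ⟨x, hx, hx, adm'_refl hx⟩ ⟨y, hy, hy, hAdm⟩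
  exact hp2 hp1

end Aux


lemma qhLength_nonneg {n : ℕ} (G : Set (EuclideanSpace ℝ (Fin n)))
    (γ : ℝ → EuclideanSpace ℝ (Fin n)) : 0 ≤ qhLength G γ :=
  intervalIntegral.integral_nonneg (by norm_num)
    (fun u _ => div_nonneg (norm_nonneg _) Metric.infDist_nonneg)

lemma qhDist_le_qhLength {n : ℕ} (G : Set (EuclideanSpace ℝ (Fin n)))
    (x y : EuclideanSpace ℝ (Fin n))
    (γ : {γ : ℝ → EuclideanSpace ℝ (Fin n) // γ 0 = x ∧ γ 1 = y ∧
      (∀ t ∈ Set.Icc (0:ℝ) 1, γ t ∈ G) ∧ ContDiffOn ℝ 1 γ (Set.Icc 0 1)}) :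
    qhDist G x y ≤ qhLength G γ.1 := by
  apply ciInf_le
  refine ⟨0, ?_⟩
  rintro s ⟨γ', rfl⟩
  exact qhLength_nonneg G γ'.1

lemma le_qhDist {n : ℕ} (G : Set (EuclideanSpace ℝ (Fin n)))
    (x y : EuclideanSpace ℝ (Fin n)) (a : ℝ)
    (hne : Nonempty {γ : ℝ → EuclideanSpace ℝ (Fin n) // γ 0 = x ∧ γ 1 = y ∧
      (∀ t ∈ Set.Icc (0:ℝ) 1, γ t ∈ G) ∧ ContDiffOn ℝ 1 γ (Set.Icc 0 1)})
    (h : ∀ γ : {γ : ℝ → EuclideanSpace ℝ (Fin n) // γ 0 = x ∧ γ 1 = y ∧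
      (∀ t ∈ Set.Icc (0:ℝ) 1, γ t ∈ G) ∧ ContDiffOn ℝ 1 γ (Set.Icc 0 1)}, a ≤ qhLength G γ.1) :
    a ≤ qhDist G x y :=
  haveI := hne
  le_ciInf h

set_option maxHeartbeats 1000000 in
theorem stmt_16 (n : ℕ) (G₁ G₂ : Set (EuclideanSpace ℝ (Fin n)))
    (hG₂o : IsOpen G₂) (hG₂c : IsConnected G₂) (hG₂p : G₂ ≠ Set.univ)
    (hsub : G₁ ⊆ G₂) (hG₁o : IsOpen G₁) (hG₁c : IsConnected G₁)
    (hG₁b : Bornology.IsBounded G₁) (hG₁nt : G₁.Nontrivial)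
    (x y : EuclideanSpace ℝ (Fin n)) (hx : x ∈ G₁) (hy : y ∈ G₁) :
    (1 + 2 * setDist G₁ (frontier G₂) / Metric.diam G₁) * qhDist G₂ x y ≤
      qhDist G₁ x y := by
  classical
  obtain ⟨a₀, ha₀, b₀, hb₀, hab₀⟩ := hG₁nt
  haveI : Nontrivial (EuclideanSpace ℝ (Fin n)) := ⟨⟨a₀, b₀, hab₀⟩⟩
  set d := setDist G₁ (frontier G₂) with hd_def
  set D := Metric.diam G₁ with hD_def
  set c := 1 + 2 * d / D with hc_def
  -- basic facts
  have hG₁ne : G₁.Nonempty := ⟨a₀, ha₀⟩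
  have hG₁nu : G₁ ≠ Set.univ := by
    intro h
    rw [h] at hG₁b
    exact NormedSpace.unbounded_univ ℝ (EuclideanSpace ℝ (Fin n)) hG₁b
  have hfr1 : (frontier G₁).Nonempty := nonempty_frontier_iff.2 ⟨hG₁ne, hG₁nu⟩
  have hfr2 : (frontier G₂).Nonempty := nonempty_frontier_iff.2 ⟨hG₂c.nonempty, hG₂p⟩
  have hd0 : 0 ≤ d := by
    refine Real.sInf_nonneg ?_
    rintro r ⟨a, ha, b, hb, rfl⟩
    exact dist_nonneg
  have hDpos : 0 < D := lt_of_lt_of_le (dist_pos.2 hab₀) (Metric.dist_le_diam_of_mem hG₁b ha₀ hb₀)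
  have hc1 : (1:ℝ) ≤ c := le_add_of_nonneg_right (by positivity)
  have hc0 : (0:ℝ) ≤ c := by linarith
  -- positivity of boundary distances
  have hpos1 : ∀ z ∈ G₁, 0 < bdist G₁ z := by
    intro z hz
    refine (isClosed_frontier.notMem_iff_infDist_pos hfr1).1 ?_
    intro hmem
    exact absurd (Set.mem_inter hz hmem)
      (by rw [hG₁o.inter_frontier_eq]; exact Set.notMem_empty z)
  have hpos2 : ∀ z ∈ G₁, 0 < bdist G₂ z := by
    intro z hz
    refine (isClosed_frontier.notMem_iff_infDist_pos hfr2).1 ?_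
    intro hmem
    exact absurd (Set.mem_inter (hsub hz) hmem)
      (by rw [hG₂o.inter_frontier_eq]; exact Set.notMem_empty z)
  -- key pointwise estimate
  have key : ∀ z ∈ G₁, c * bdist G₁ z ≤ bdist G₂ z := by
    intro z hz
    set r := bdist G₁ z with hr_def
    have hrpos : 0 < r := hpos1 z hz
    -- the ball of radius r around z lies in G₁
    have hball : ball z r ⊆ G₁ := by
      intro w hw
      by_contra hwG
      obtain ⟨p, hpseg, hpfr⟩ := aux_frontier_cross hG₁o (convex_segment z w).isPreconnected
        ⟨z, left_mem_segment ℝ z w, hz⟩ ⟨w, right_mem_segment ℝ z w, hwG⟩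
      have hpball : p ∈ ball z r := (convex_ball z r).segment_subset (mem_ball_self hrpos) hw hpseg
      have : r ≤ dist z p := Metric.infDist_le_dist_of_mem hpfr
      rw [mem_ball, dist_comm] at hpball
      linarith
    -- hence 2 r ≤ D
    have hrD : r ≤ D / 2 := by
      obtain ⟨v, hv⟩ := exists_ne (0 : EuclideanSpace ℝ (Fin n))
      have hvn : 0 < ‖v‖ := norm_pos_iff.2 hv
      have h2r : ∀ r' : ℝ, 0 < r' → r' < r → 2 * r' ≤ D := by
        intro r' hr'0 hr'r
        have hnorm : ‖(r' / ‖v‖) • v‖ = r' := by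
          rw [norm_smul, Real.norm_eq_abs, abs_of_nonneg (div_nonneg hr'0.le (norm_nonneg v)),
            div_mul_cancel₀ r' hvn.ne']
        have haG : z + (r' / ‖v‖) • v ∈ G₁ := hball (by
          rw [mem_ball, dist_eq_norm]
          have h : z + (r' / ‖v‖) • v - z = (r' / ‖v‖) • v := by abel
          rw [h, hnorm]; exact hr'r)
        have hbG : z - (r' / ‖v‖) • v ∈ G₁ := hball (by
          rw [mem_ball, dist_eq_norm]
          have h : z - (r' / ‖v‖) • v - z = -((r' / ‖v‖) • v) := by abel
          rw [h, norm_neg, hnorm]; exact hr'r)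
        have hab : dist (z + (r' / ‖v‖) • v) (z - (r' / ‖v‖) • v) = 2 * r' := by
          rw [dist_eq_norm]
          have h : z + (r' / ‖v‖) • v - (z - (r' / ‖v‖) • v) = (2 * (r' / ‖v‖)) • v := by
            rw [two_mul, add_smul]; abel
          rw [h, norm_smul, Real.norm_eq_abs,
            abs_of_nonneg (by positivity : (0:ℝ) ≤ 2 * (r' / ‖v‖)), mul_assoc,
            div_mul_cancel₀ r' hvn.ne']
        calc 2 * r' = dist (z + (r' / ‖v‖) • v) (z - (r' / ‖v‖) • v) := hab.symm
          _ ≤ D := Metric.dist_le_diam_of_mem hG₁b haG hbG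
      by_contra hcon
      push_neg at hcon
      set r' := (D / 2 + r) / 2 with hr'_def
      have h1 : D / 2 < r' := by rw [hr'_def]; linarith
      have h2 : r' < r := by rw [hr'_def]; linarith
      have h3 : 0 < r' := by positivity
      have := h2r r' h3 h2
      linarith
    -- and  bdist G₁ z + d ≤ bdist G₂ z
    have hb2 : r + d ≤ bdist G₂ z := by
      by_contra hcon
      push_neg at hcon
      obtain ⟨w, hwfr, hw⟩ := (Metric.infDist_lt_iff hfr2).1 hcon
      have hwG1 : w ∉ G₁ := by
        intro hw1
        exact absurd (Set.mem_inter (hsub hw1) hwfr)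
          (by rw [hG₂o.inter_frontier_eq]; exact Set.notMem_empty w)
      obtain ⟨p, hpseg, hpfr⟩ := aux_frontier_cross hG₁o (convex_segment z w).isPreconnected
        ⟨z, left_mem_segment ℝ z w, hz⟩ ⟨w, right_mem_segment ℝ z w, hwG1⟩
      have e1 : dist z p + dist p w = dist z w := dist_add_dist_of_mem_segment hpseg
      have e2 : r ≤ dist z p := Metric.infDist_le_dist_of_mem hpfr
      have e3 : d ≤ dist p w := by
        refine le_of_forall_pos_le_add ?_
        intro ε hε
        obtain ⟨q, hqG, hq⟩ := Metric.mem_closure_iff.1 (frontier_subset_closure hpfr) ε hε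
        have hdq : d ≤ dist q w := by
          refine csInf_le ⟨0, ?_⟩ (mem_image2_of_mem hqG hwfr)
          rintro s ⟨a, _, b, _, rfl⟩
          exact dist_nonneg
        calc d ≤ dist q w := hdq
          _ ≤ dist q p + dist p w := dist_triangle q p w
          _ ≤ dist p w + ε := by rw [dist_comm q p]; linarith
      linarith
    calc c * r = r + (2 * d / D) * r := by rw [hc_def]; ring
      _ ≤ r + (2 * d / D) * (D / 2) := by
          refine add_le_add_right (mul_le_mul_of_nonneg_left hrD (by positivity)) r
      _ = r + d := by field_simp
      _ ≤ bdist G₂ z := hb2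
  -- comparison of path lengths
  have hlen : ∀ γ : ℝ → EuclideanSpace ℝ (Fin n), (∀ t ∈ Set.Icc (0:ℝ) 1, γ t ∈ G₁) →
      ContDiffOn ℝ 1 γ (Set.Icc 0 1) → c * qhLength G₂ γ ≤ qhLength G₁ γ := by
    intro γ hmem hsm
    set g := fun t => ‖derivWithin γ (Set.Icc (0:ℝ) 1) t‖ with hg_def
    have hgc : ContinuousOn g (Set.Icc 0 1) :=
      (hsm.continuousOn_derivWithin (uniqueDiffOn_Icc zero_lt_one) le_rfl).norm
    have hγc : ContinuousOn γ (Set.Icc 0 1) := hsm.continuousOn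
    have hb1c : ContinuousOn (fun t => bdist G₁ (γ t)) (Set.Icc 0 1) :=
      (Metric.continuous_infDist_pt (frontier G₁)).comp_continuousOn hγc
    have hb2c : ContinuousOn (fun t => bdist G₂ (γ t)) (Set.Icc 0 1) :=
      (Metric.continuous_infDist_pt (frontier G₂)).comp_continuousOn hγc
    have hne1 : ∀ t ∈ Set.Icc (0:ℝ) 1, bdist G₁ (γ t) ≠ 0 := fun t ht => (hpos1 _ (hmem t ht)).ne'
    have hne2 : ∀ t ∈ Set.Icc (0:ℝ) 1, bdist G₂ (γ t) ≠ 0 := fun t ht => (hpos2 _ (hmem t ht)).ne'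
    have hdeq : ∀ᵐ t : ℝ ∂MeasureTheory.volume, t ∈ Set.uIoc (0:ℝ) 1 →
        deriv γ t = derivWithin γ (Set.Icc (0:ℝ) 1) t := by
      have h1 : ∀ᵐ t : ℝ ∂MeasureTheory.volume, t ≠ 1 := by
        rw [MeasureTheory.ae_iff]
        have : {t : ℝ | ¬ t ≠ 1} = {1} := by ext u; simp
        rw [this]
        exact Real.volume_singleton
      filter_upwards [h1] with t ht1 htI
      rw [Set.uIoc_of_le (by norm_num : (0:ℝ) ≤ 1)] at htI
      have htIoo : t ∈ Set.Ioo (0:ℝ) 1 := ⟨htI.1, lt_of_le_of_ne htI.2 ht1⟩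
      exact (derivWithin_of_mem_nhds (Icc_mem_nhds htIoo.1 htIoo.2)).symm
    have heq1 : qhLength G₁ γ = ∫ t in (0:ℝ)..1, g t / bdist G₁ (γ t) := by
      refine intervalIntegral.integral_congr_ae ?_
      filter_upwards [hdeq] with t ht htI
      rw [ht htI]
    have heq2 : qhLength G₂ γ = ∫ t in (0:ℝ)..1, g t / bdist G₂ (γ t) := by
      refine intervalIntegral.integral_congr_ae ?_
      filter_upwards [hdeq] with t ht htI
      rw [ht htI]
    have hint1 : IntervalIntegrable (fun t => g t / bdist G₁ (γ t)) MeasureTheory.volume 0 1 := by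
      apply ContinuousOn.intervalIntegrable
      rw [Set.uIcc_of_le (by norm_num : (0:ℝ) ≤ 1)]
      exact hgc.div hb1c hne1
    have hint2 : IntervalIntegrable (fun t => c * (g t / bdist G₂ (γ t)))
        MeasureTheory.volume 0 1 := by
      apply ContinuousOn.intervalIntegrable
      rw [Set.uIcc_of_le (by norm_num : (0:ℝ) ≤ 1)]
      exact continuousOn_const.mul (hgc.div hb2c hne2)
    have hptwise : ∀ t ∈ Set.Icc (0:ℝ) 1,
        c * (g t / bdist G₂ (γ t)) ≤ g t / bdist G₁ (γ t) := by
      intro t ht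
      have hb1 := hpos1 _ (hmem t ht)
      have hb2 := hpos2 _ (hmem t ht)
      have hk := key _ (hmem t ht)
      have hdiv : c / bdist G₂ (γ t) ≤ 1 / bdist G₁ (γ t) :=
        (div_le_div_iff₀ hb2 hb1).2 (by linarith)
      calc c * (g t / bdist G₂ (γ t)) = g t * (c / bdist G₂ (γ t)) := by ring
        _ ≤ g t * (1 / bdist G₁ (γ t)) := mul_le_mul_of_nonneg_left hdiv (norm_nonneg _)
        _ = g t / bdist G₁ (γ t) := by ring
    calc c * qhLength G₂ γ = ∫ t in (0:ℝ)..1, c * (g t / bdist G₂ (γ t)) := by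
          rw [heq2, intervalIntegral.integral_const_mul]
      _ ≤ ∫ t in (0:ℝ)..1, g t / bdist G₁ (γ t) :=
          intervalIntegral.integral_mono_on (by norm_num) hint2 hint1 hptwise
      _ = qhLength G₁ γ := heq1.symm
  -- nonemptiness of the index type for G₁
  obtain ⟨γ₀, hγ₀sm, hγ₀0, hγ₀1, hγ₀mem⟩ :=
    adm'_of_connected hG₁o hG₁c.isPreconnected hx hy
  have hne_idx : Nonempty {γ : ℝ → EuclideanSpace ℝ (Fin n) // γ 0 = x ∧ γ 1 = y ∧
      (∀ t ∈ Set.Icc (0:ℝ) 1, γ t ∈ G₁) ∧ ContDiffOn ℝ 1 γ (Set.Icc 0 1)} :=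
    ⟨⟨γ₀, hγ₀0, hγ₀1, fun t _ => hγ₀mem t, hγ₀sm.contDiffOn⟩⟩
  -- conclusion
  show c * qhDist G₂ x y ≤ qhDist G₁ x y
  refine le_qhDist G₁ x y _ hne_idx fun γ₁ => ?_
  obtain ⟨h0, h1, hmem, hsm⟩ := γ₁.2
  have h5 : qhDist G₂ x y ≤ qhLength G₂ γ₁.1 :=
    qhDist_le_qhLength G₂ x y ⟨γ₁.1, h0, h1, fun t ht => hsub (hmem t ht), hsm⟩
  calc c * qhDist G₂ x y ≤ c * qhLength G₂ γ₁.1 := mul_le_mul_of_nonneg_left h5 hc0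
    _ ≤ qhLength G₁ γ₁.1 := hlen γ₁.1 hmem hsm
end

section
/- Let 0 < r < R, let z₀ ∈ ℝⁿ, and set G₁ = Bⁿ(z₀, r) and G₂ = Bⁿ(z₀, R). Then for all x, y ∈ G₁, both j_{G₁}(x,y) ≥ (R/r) · j_{G₂}(x,y) and k_{G₁}(x,y) ≥ (R/r) · k_{G₂}(x,y). -/
open Set Metric

lemma log_le_half {x : ℝ} (hx : 1 ≤ x) : Real.log x ≤ (x - x⁻¹) / 2 := by
  rcases eq_or_lt_of_le hx with h | h
  · simp [← h]
  · have hl : 0 < Real.log x := Real.log_pos h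
    have := Real.self_lt_sinh_iff.2 hl
    rw [Real.sinh_eq, Real.exp_log (by linarith), ← Real.log_inv,
      Real.exp_log (by positivity)] at this
    linarith

lemma core_mono {d m r R : ℝ} (hd : 0 ≤ d) (hdm : d ≤ 2*m) (hmr : m < r) (hrR : r ≤ R) :
    R * Real.log (1 + d / (R - m)) ≤ r * Real.log (1 + d / (r - m)) := by
  set g : ℝ → ℝ := fun s => s * (Real.log (s - m + d) - Real.log (s - m)) with hg
  have hder : ∀ s : ℝ, m < s → HasDerivAt g
      (1 * (Real.log (s - m + d) - Real.log (s - m)) + s * ((s - m + d)⁻¹ - (s - m)⁻¹)) s := by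
    intro s hs
    have hA : (0:ℝ) < s - m := by linarith
    have hB : (0:ℝ) < s - m + d := by linarith
    have h1 : HasDerivAt (fun s : ℝ => s - m + d) 1 s := by
      simpa using ((hasDerivAt_id s).sub_const m).add_const d
    have h1' : HasDerivAt (fun s : ℝ => s - m) 1 s := by
      simpa using (hasDerivAt_id s).sub_const m
    have h2 : HasDerivAt (fun s : ℝ => Real.log (s - m + d)) (s - m + d)⁻¹ s := by
      simpa [Function.comp_def] using (Real.hasDerivAt_log hB.ne').comp s h1
    have h3 : HasDerivAt (fun s : ℝ => Real.log (s - m)) (s - m)⁻¹ s := by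
      simpa [Function.comp_def] using (Real.hasDerivAt_log hA.ne').comp s h1'
    exact (hasDerivAt_id s).mul (h2.sub h3)
  have hnonpos : ∀ s : ℝ, m < s →
      1 * (Real.log (s - m + d) - Real.log (s - m)) + s * ((s - m + d)⁻¹ - (s - m)⁻¹) ≤ 0 := by
    intro s hs
    have hA : (0:ℝ) < s - m := by linarith
    have hB : (0:ℝ) < s - m + d := by linarith
    have hlog : Real.log (s - m + d) - Real.log (s - m)
        = Real.log ((s - m + d) / (s - m)) := (Real.log_div hB.ne' hA.ne').symm
    have h1le : (1:ℝ) ≤ (s - m + d) / (s - m) := (one_le_div hA).2 (by linarith)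
    have hle := log_le_half h1le
    have e1 : ((s - m + d)/(s - m) - ((s - m + d)/(s - m))⁻¹) / 2 + s * ((s - m + d)⁻¹ - (s - m)⁻¹)
        = d * (d - 2*m) / (2 * (s - m) * (s - m + d)) := by
      rw [inv_div]
      field_simp
      ring
    have e2 : d * (d - 2*m) / (2 * (s - m) * (s - m + d)) ≤ 0 := by
      apply div_nonpos_of_nonpos_of_nonneg
      · nlinarith
      · positivity
    nlinarith [hle, e1, e2, hlog]
  have mono : AntitoneOn g (Set.Icc r R) := by
    apply antitoneOn_of_deriv_nonpos (convex_Icc r R)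
    · exact fun s hs => ((hder s (lt_of_lt_of_le hmr hs.1)).continuousAt).continuousWithinAt
    · intro s hs
      rw [interior_Icc] at hs
      exact (hder s (lt_of_lt_of_le hmr hs.1.le)).differentiableAt.differentiableWithinAt
    · intro s hs
      rw [interior_Icc] at hs
      rw [(hder s (hmr.trans hs.1)).deriv]
      exact hnonpos s (hmr.trans hs.1)
  have hgr := mono (Set.left_mem_Icc.2 hrR) (Set.right_mem_Icc.2 hrR) hrR
  have key : ∀ s : ℝ, m < s →
      Real.log (1 + d / (s - m)) = Real.log (s - m + d) - Real.log (s - m) := by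
    intro s hs
    have hA : (0:ℝ) < s - m := by linarith
    have hB : (0:ℝ) < s - m + d := by linarith
    rw [show (1 + d/(s - m)) = (s - m + d)/(s - m) by field_simp, Real.log_div hB.ne' hA.ne']
  rw [key r hmr, key R (hmr.trans_le hrR)]
  exact hgr

lemma bdist_ball {n : ℕ} (hn : 1 ≤ n) {ρ : ℝ} (hρ : 0 < ρ)
    {z₀ p : EuclideanSpace ℝ (Fin n)} (hp : p ∈ Metric.ball z₀ ρ) :
    bdist (Metric.ball z₀ ρ) p = ρ - dist p z₀ := by
  have ha : dist p z₀ < ρ := mem_ball.mp hp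
  have ha0 : 0 ≤ dist p z₀ := dist_nonneg
  rw [bdist, frontier_ball z₀ hρ.ne']
  apply le_antisymm
  · by_cases hpz : p = z₀
    · subst hpz
      have hqs : p + EuclideanSpace.single (⟨0, hn⟩ : Fin n) ρ ∈ sphere p ρ := by
        rw [mem_sphere, dist_eq_norm, add_sub_cancel_left, EuclideanSpace.norm_single,
          Real.norm_eq_abs, abs_of_pos hρ]
      have h1 := Metric.infDist_le_dist_of_mem (x := p) hqs
      rw [dist_self, sub_zero]
      rw [dist_comm, mem_sphere.mp hqs] at h1
      exact h1
    · have hd0 : 0 < dist p z₀ := dist_pos.2 hpz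
      have hnorm : ‖p - z₀‖ = dist p z₀ := by rw [dist_eq_norm]
      set c : ℝ := ρ / dist p z₀ with hc
      have hc1 : 1 ≤ c := (one_le_div hd0).2 ha.le
      have hqs : z₀ + c • (p - z₀) ∈ sphere z₀ ρ := by
        rw [mem_sphere, dist_eq_norm, add_sub_cancel_left, norm_smul, Real.norm_eq_abs,
          hnorm, abs_of_pos (by positivity : (0:ℝ) < c), hc, div_mul_cancel₀ _ hd0.ne']
      have hdq : dist p (z₀ + c • (p - z₀)) = ρ - dist p z₀ := by
        have he : p - (z₀ + c • (p - z₀)) = (1 - c) • (p - z₀) := by module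
        rw [dist_eq_norm, he, norm_smul, Real.norm_eq_abs, hnorm,
          abs_of_nonpos (by linarith), hc]
        field_simp
        ring
      calc Metric.infDist p (sphere z₀ ρ) ≤ dist p (z₀ + c • (p - z₀)) :=
            Metric.infDist_le_dist_of_mem hqs
        _ = ρ - dist p z₀ := hdq
  · rw [Metric.infDist_eq_iInf]
    have hne : (sphere z₀ ρ).Nonempty := by
      refine ⟨z₀ + EuclideanSpace.single (⟨0, hn⟩ : Fin n) ρ, ?_⟩
      rw [mem_sphere, dist_eq_norm, add_sub_cancel_left, EuclideanSpace.norm_single,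
        Real.norm_eq_abs, abs_of_pos hρ]
    haveI : Nonempty (sphere z₀ ρ) := hne.to_subtype
    apply le_ciInf
    intro q
    have hqz : dist (q : EuclideanSpace ℝ (Fin n)) z₀ = ρ := mem_sphere.mp q.2
    have := dist_triangle (q : EuclideanSpace ℝ (Fin n)) p z₀
    rw [dist_comm (q : EuclideanSpace ℝ (Fin n)) p] at this
    linarith

lemma qh_integrable {n : ℕ} {G : Set (EuclideanSpace ℝ (Fin n))}
    {γ : ℝ → EuclideanSpace ℝ (Fin n)} (hγ : ContDiffOn ℝ 1 γ (Set.Icc 0 1))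
    (hb : ∀ t ∈ Set.Icc (0:ℝ) 1, 0 < bdist G (γ t)) :
    IntervalIntegrable (fun t => ‖deriv γ t‖ / bdist G (γ t)) MeasureTheory.volume 0 1 := by
  rw [intervalIntegrable_iff_integrableOn_Icc_of_le zero_le_one]
  have hcontb : ContinuousOn (fun t => bdist G (γ t)) (Set.Icc 0 1) :=
    (Metric.continuous_infDist_pt (frontier G)).comp_continuousOn hγ.continuousOn
  have hms : MeasureTheory.AEStronglyMeasurable (fun t => ‖deriv γ t‖ / bdist G (γ t))
      (MeasureTheory.volume.restrict (Set.Icc (0:ℝ) 1)) := by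
    have hm1 : MeasureTheory.AEStronglyMeasurable (fun t => ‖deriv γ t‖)
        (MeasureTheory.volume.restrict (Set.Icc (0:ℝ) 1)) :=
      ((measurable_deriv γ).norm).aestronglyMeasurable
    have hm2 : MeasureTheory.AEStronglyMeasurable (fun t => (bdist G (γ t))⁻¹)
        (MeasureTheory.volume.restrict (Set.Icc (0:ℝ) 1)) :=
      (hcontb.inv₀ fun t ht => (hb t ht).ne').aestronglyMeasurable measurableSet_Icc
    simpa [div_eq_mul_inv, Pi.mul_def] using hm1.mul hm2
  have hd : ContinuousOn (derivWithin γ (Set.Icc 0 1)) (Set.Icc 0 1) :=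
    hγ.continuousOn_derivWithin (uniqueDiffOn_Icc one_pos) le_rfl
  obtain ⟨M, hM⟩ := isCompact_Icc.exists_bound_of_continuousOn hd
  obtain ⟨t₀, ht₀, hmin⟩ := isCompact_Icc.exists_isMinOn (Set.nonempty_Icc.2 zero_le_one) hcontb
  set ε : ℝ := bdist G (γ t₀) with hε
  have hεpos : 0 < ε := hb t₀ ht₀
  have hM0 : 0 ≤ M := le_trans (norm_nonneg _) (hM t₀ ht₀)
  apply MeasureTheory.Integrable.mono'
    (g := fun _ => M / ε) (MeasureTheory.integrableOn_const measure_Icc_lt_top.ne) hms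
  · have h1 : ∀ᵐ t ∂(MeasureTheory.volume.restrict (Set.Icc (0:ℝ) 1)), t ∈ Set.Icc (0:ℝ) 1 :=
      MeasureTheory.ae_restrict_mem measurableSet_Icc
    have h2 : ∀ᵐ t ∂(MeasureTheory.volume.restrict (Set.Icc (0:ℝ) 1)),
        t ∉ ({0, 1} : Set ℝ) := by
      apply MeasureTheory.ae_restrict_of_ae
      have hz : MeasureTheory.volume ({0, 1} : Set ℝ) = 0 := by
        rw [Set.insert_eq]
        exact MeasureTheory.measure_union_null (MeasureTheory.measure_singleton 0)
          (MeasureTheory.measure_singleton 1)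
      rw [MeasureTheory.ae_iff]
      simp only [not_not]
      simpa only [Set.setOf_mem_eq] using hz
    filter_upwards [h1, h2] with t ht hne
    have hIoo : t ∈ Set.Ioo (0:ℝ) 1 := by
      constructor
      · rcases lt_or_eq_of_le ht.1 with h | h
        · exact h
        · exact absurd (by simp [← h]) hne
      · rcases lt_or_eq_of_le ht.2 with h | h
        · exact h
        · exact absurd (by simp [h]) hne
    have hdw : derivWithin γ (Set.Icc 0 1) t = deriv γ t :=
      derivWithin_of_mem_nhds (Icc_mem_nhds hIoo.1 hIoo.2)
    have hbd : ‖deriv γ t‖ ≤ M := hdw ▸ hM t ht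
    have hεb : ε ≤ bdist G (γ t) := hmin ht
    rw [Real.norm_eq_abs, abs_of_nonneg (div_nonneg (norm_nonneg _) (le_of_lt (hb t ht)))]
    exact div_le_div₀ hM0 hbd hεpos hεb

set_option maxHeartbeats 1000000 in
theorem stmt_17 (n : ℕ) (hn : 1 ≤ n) (r R : ℝ) (hr : 0 < r) (hrR : r < R)
    (z₀ x y : EuclideanSpace ℝ (Fin n))
    (hx : x ∈ Metric.ball z₀ r) (hy : y ∈ Metric.ball z₀ r) :
    (R / r) * jDist (Metric.ball z₀ R) x y ≤ jDist (Metric.ball z₀ r) x y ∧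
    (R / r) * qhDist (Metric.ball z₀ R) x y ≤ qhDist (Metric.ball z₀ r) x y := by
  have hR : 0 < R := hr.trans hrR
  have hsub : Metric.ball z₀ r ⊆ Metric.ball z₀ R := ball_subset_ball hrR.le
  have hax : dist x z₀ < r := mem_ball.mp hx
  have hay : dist y z₀ < r := mem_ball.mp hy
  constructor
  · -- jDist part
    rw [jDist, jDist, bdist_ball hn hr hx, bdist_ball hn hr hy,
      bdist_ball hn hR (hsub hx), bdist_ball hn hR (hsub hy)]
    set a := dist x z₀ with hadef
    set b := dist y z₀ with hbdef
    set d := dist x y with hddef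
    set m := max a b with hmdef
    have hminr : min (r - a) (r - b) = r - m := min_sub_sub_left r a b
    have hminR : min (R - a) (R - b) = R - m := min_sub_sub_left R a b
    rw [hminr, hminR]
    have hm : m < r := max_lt hax hay
    have hd2m : d ≤ 2 * m := by
      have h1 : d ≤ a + b := dist_triangle_right x y z₀
      have h2 : a ≤ m := le_max_left a b
      have h3 : b ≤ m := le_max_right a b
      linarith
    rw [div_mul_eq_mul_div, div_le_iff₀ hr, mul_comm _ r]
    exact core_mono dist_nonneg hd2m hm hrR.le
  · -- qhDist part
    have hRr0 : 0 ≤ R / r := le_of_lt (div_pos hR hr)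
    haveI : Nonempty {γ : ℝ → EuclideanSpace ℝ (Fin n) // γ 0 = x ∧ γ 1 = y ∧
        (∀ t ∈ Set.Icc (0:ℝ) 1, γ t ∈ Metric.ball z₀ r) ∧ ContDiffOn ℝ 1 γ (Set.Icc 0 1)} := by
      refine ⟨⟨fun t => x + t • (y - x), by simp, by simp, fun t ht => ?_, ?_⟩⟩
      · show x + t • (y - x) ∈ Metric.ball z₀ r
        have heq : x + t • (y - x) = (1 - t) • x + t • y := by module
        rw [heq]
        exact (convex_ball z₀ r) hx hy (by linarith [ht.1, ht.2]) ht.1 (by ring)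
      · exact ((contDiff_const.add (contDiff_id.smul contDiff_const)) :
          ContDiff ℝ 1 fun t : ℝ => x + t • (y - x)).contDiffOn
    rw [qhDist]
    refine le_ciInf fun γ => ?_
    obtain ⟨γ, h0, h1, hmem, hsm⟩ := γ
    have hb1 : ∀ t ∈ Set.Icc (0:ℝ) 1, 0 < bdist (Metric.ball z₀ r) (γ t) := by
      intro t ht
      rw [bdist_ball hn hr (hmem t ht)]
      linarith [mem_ball.mp (hmem t ht)]
    have hb2 : ∀ t ∈ Set.Icc (0:ℝ) 1, 0 < bdist (Metric.ball z₀ R) (γ t) := by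
      intro t ht
      rw [bdist_ball hn hR (hsub (hmem t ht))]
      linarith [mem_ball.mp (hmem t ht), hrR]
    have int1 : IntervalIntegrable (fun t => ‖deriv γ t‖ / bdist (Metric.ball z₀ r) (γ t))
        MeasureTheory.volume 0 1 := qh_integrable hsm hb1
    have int2 : IntervalIntegrable (fun t => ‖deriv γ t‖ / bdist (Metric.ball z₀ R) (γ t))
        MeasureTheory.volume 0 1 := qh_integrable hsm hb2
    have hbdd : BddBelow (Set.range fun γ' : {γ' : ℝ → EuclideanSpace ℝ (Fin n) // γ' 0 = x ∧
        γ' 1 = y ∧ (∀ t ∈ Set.Icc (0:ℝ) 1, γ' t ∈ Metric.ball z₀ R) ∧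
        ContDiffOn ℝ 1 γ' (Set.Icc 0 1)} => qhLength (Metric.ball z₀ R) γ'.1) := by
      refine ⟨0, ?_⟩
      rintro v ⟨γ', rfl⟩
      exact qhLength_nonneg _ _
    have h2 : qhDist (Metric.ball z₀ R) x y ≤ qhLength (Metric.ball z₀ R) γ :=
      ciInf_le hbdd ⟨γ, h0, h1, fun t ht => hsub (hmem t ht), hsm⟩
    have h3 : (R / r) * qhLength (Metric.ball z₀ R) γ ≤ qhLength (Metric.ball z₀ r) γ := by
      rw [qhLength, qhLength, ← intervalIntegral.integral_const_mul]
      apply intervalIntegral.integral_mono_on zero_le_one (int2.const_mul _) int1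
      intro t ht
      have hp : γ t ∈ Metric.ball z₀ r := hmem t ht
      rw [bdist_ball hn hr hp, bdist_ball hn hR (hsub hp)]
      set a := dist (γ t) z₀ with hadef
      have ha : a < r := mem_ball.mp hp
      have ha0 : 0 ≤ a := dist_nonneg
      set v := ‖deriv γ t‖ with hvdef
      have hv : 0 ≤ v := norm_nonneg _
      have h4 : R / r * (1 / (R - a)) ≤ 1 / (r - a) := by
        rw [div_mul_div_comm, mul_one, div_le_div_iff₀ (by nlinarith) (by linarith)]
        nlinarith
      calc R / r * (v / (R - a)) = v * (R / r * (1 / (R - a))) := by ring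
        _ ≤ v * (1 / (r - a)) := mul_le_mul_of_nonneg_left h4 hv
        _ = v / (r - a) := by ring
    calc (R / r) * qhDist (Metric.ball z₀ R) x y
        ≤ (R / r) * qhLength (Metric.ball z₀ R) γ := mul_le_mul_of_nonneg_left h2 hRr0
      _ ≤ qhLength (Metric.ball z₀ r) γ := h3
end

section
/- Let G₁ = {(x,y) ∈ ℝ² : |x| + |y| < 1} and G₂ = {(x,y) ∈ ℝ² : x² + y² < 1}. Then for every w ∈ G₁, δ_{G₂}(w) ≥ √2 · δ_{G₁}(w). -/
open Set Metric

theorem stmt_18 (w : EuclideanSpace ℝ (Fin 2))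
    (hw : w ∈ {p : EuclideanSpace ℝ (Fin 2) | |p 0| + |p 1| < 1}) :
    Real.sqrt 2 * bdist {p : EuclideanSpace ℝ (Fin 2) | |p 0| + |p 1| < 1} w ≤
      bdist (Metric.ball (0 : EuclideanSpace ℝ (Fin 2)) 1) w := by
  classical
  set G : Set (EuclideanSpace ℝ (Fin 2)) := {p | |p 0| + |p 1| < 1} with hG
  have hab : |w 0| + |w 1| < 1 := hw
  set a := w 0 with ha
  set b := w 1 with hb
  set t : ℝ := (1 - |a| - |b|) / 2 with ht
  have ht0 : 0 < t := by
    have : |a| + |b| < 1 := hab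
    simp only [ht]; linarith
  set s₀ : ℝ := if 0 ≤ a then 1 else -1 with hs₀
  set s₁ : ℝ := if 0 ≤ b then 1 else -1 with hs₁
  set p : EuclideanSpace ℝ (Fin 2) := !₂[a + s₀ * t, b + s₁ * t] with hp
  have hp0 : p 0 = a + s₀ * t := rfl
  have hp1 : p 1 = b + s₁ * t := rfl
  have habs0 : |p 0| = |a| + t := by
    rw [hp0, hs₀]
    by_cases h : 0 ≤ a
    · simp only [if_pos h, one_mul]
      rw [abs_of_nonneg (by linarith), abs_of_nonneg h]
    · push_neg at h
      simp only [if_neg (not_le.2 h)]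
      rw [abs_of_neg (by nlinarith), abs_of_neg h]; ring
  have habs1 : |p 1| = |b| + t := by
    rw [hp1, hs₁]
    by_cases h : 0 ≤ b
    · simp only [if_pos h, one_mul]
      rw [abs_of_nonneg (by linarith), abs_of_nonneg h]
    · push_neg at h
      simp only [if_neg (not_le.2 h)]
      rw [abs_of_neg (by nlinarith), abs_of_neg h]; ring
  have hpsum : |p 0| + |p 1| = 1 := by
    rw [habs0, habs1, ht]; ring
  -- p is on the frontier of G
  have hpfront : p ∈ frontier G := by
    constructor
    · -- p ∈ closure G
      have htend : Filter.Tendsto (fun r : ℝ => r • p) (nhdsWithin 1 (Set.Iio 1)) (nhds p) := by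
        have : Filter.Tendsto (fun r : ℝ => r • p) (nhds 1) (nhds p) := by
          have := (continuous_id.smul (continuous_const : Continuous fun _ : ℝ => p) : Continuous fun r : ℝ => r • p).tendsto 1
          exact (continuous_id.smul continuous_const).tendsto' 1 p (one_smul ℝ p)
        exact this.mono_left nhdsWithin_le_nhds
      refine mem_closure_of_tendsto htend ?_
      filter_upwards [Ioo_mem_nhdsLT_of_mem (Set.mem_Ioc.2 ⟨zero_lt_one, le_refl (1:ℝ)⟩)]
        with r hr
      have hr0 : 0 < r := hr.1
      have hr1 : r < 1 := hr.2
      show |(r • p) 0| + |(r • p) 1| < 1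
      have e0 : (r • p) 0 = r * p 0 := rfl
      have e1 : (r • p) 1 = r * p 1 := rfl
      rw [e0, e1, abs_mul, abs_mul, abs_of_pos hr0, ← mul_add, hpsum]
      simpa using hr1
    · -- p ∉ interior G
      intro hpi
      have : p ∈ G := interior_subset hpi
      have : |p 0| + |p 1| < 1 := this
      rw [hpsum] at this
      exact lt_irrefl _ this
  -- distance from w to p
  have hdist : dist w p = Real.sqrt 2 * t := by
    have hseq : dist w p = Real.sqrt (dist (w 0) (p 0) ^ 2 + dist (w 1) (p 1) ^ 2) := by
      rw [EuclideanSpace.dist_eq]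
      congr 1
      simp [Fin.sum_univ_two]
    have hs0sq : s₀ ^ 2 = 1 := by rw [hs₀]; split <;> norm_num
    have hs1sq : s₁ ^ 2 = 1 := by rw [hs₁]; split <;> norm_num
    have d0 : dist (w 0) (p 0) ^ 2 = t ^ 2 := by
      rw [Real.dist_eq, hp0, ← ha, sq_abs]
      have : a - (a + s₀ * t) = -(s₀ * t) := by ring
      rw [this]; rw [neg_pow, mul_pow, hs0sq]; ring
    have d1 : dist (w 1) (p 1) ^ 2 = t ^ 2 := by
      rw [Real.dist_eq, hp1, ← hb, sq_abs]
      have : b - (b + s₁ * t) = -(s₁ * t) := by ring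
      rw [this]; rw [neg_pow, mul_pow, hs1sq]; ring
    rw [hseq, d0, d1]
    rw [show t ^ 2 + t ^ 2 = 2 * t ^ 2 by ring, Real.sqrt_mul (by norm_num),
      Real.sqrt_sq ht0.le]
  have hbd1 : bdist G w ≤ Real.sqrt 2 * t := by
    rw [← hdist]
    exact Metric.infDist_le_dist_of_mem hpfront
  have hsqrt2 : Real.sqrt 2 * Real.sqrt 2 = 2 := Real.mul_self_sqrt (by norm_num)
  have key1 : Real.sqrt 2 * bdist G w ≤ 1 - |a| - |b| := by
    have h2 : Real.sqrt 2 * bdist G w ≤ Real.sqrt 2 * (Real.sqrt 2 * t) :=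
      mul_le_mul_of_nonneg_left hbd1 (Real.sqrt_nonneg 2)
    calc Real.sqrt 2 * bdist G w ≤ Real.sqrt 2 * (Real.sqrt 2 * t) := h2
      _ = 2 * t := by rw [← mul_assoc, hsqrt2]
      _ = 1 - |a| - |b| := by rw [ht]; ring
  -- norm of w
  have hnorm : ‖w‖ ≤ |a| + |b| := by
    have hwn : ‖w‖ = Real.sqrt (a ^ 2 + b ^ 2) := by
      rw [EuclideanSpace.norm_eq]
      congr 1
      simp [Fin.sum_univ_two, ← ha, ← hb, sq_abs]
    rw [hwn]
    have h1 : a ^ 2 + b ^ 2 ≤ (|a| + |b|) ^ 2 := by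
      have := abs_nonneg a; have := abs_nonneg b
      nlinarith [sq_abs a, sq_abs b, mul_nonneg (abs_nonneg a) (abs_nonneg b)]
    calc Real.sqrt (a ^ 2 + b ^ 2) ≤ Real.sqrt ((|a| + |b|) ^ 2) := Real.sqrt_le_sqrt h1
      _ = |a| + |b| := Real.sqrt_sq (by positivity)
  -- lower bound on bdist of the ball
  have hball : 1 - ‖w‖ ≤ bdist (Metric.ball (0 : EuclideanSpace ℝ (Fin 2)) 1) w := by
    unfold bdist
    rw [frontier_ball (0 : EuclideanSpace ℝ (Fin 2)) (one_ne_zero)]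
    have hne : (Metric.sphere (0 : EuclideanSpace ℝ (Fin 2)) 1).Nonempty :=
      NormedSpace.sphere_nonempty.2 zero_le_one
    rw [Metric.infDist_eq_iInf]
    have : Nonempty (Metric.sphere (0 : EuclideanSpace ℝ (Fin 2)) 1) := hne.coe_sort
    refine le_ciInf fun q => ?_
    have hq : ‖(q : EuclideanSpace ℝ (Fin 2))‖ = 1 := by
      have := q.2
      simp
    have : (1 : ℝ) - ‖w‖ = ‖(q : EuclideanSpace ℝ (Fin 2))‖ - ‖w‖ := by rw [hq]
    rw [this, dist_comm]
    calc ‖(q : EuclideanSpace ℝ (Fin 2))‖ - ‖w‖ ≤ ‖(q : EuclideanSpace ℝ (Fin 2)) - w‖ :=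
          norm_sub_norm_le _ _
      _ = dist (q : EuclideanSpace ℝ (Fin 2)) w := (dist_eq_norm _ _).symm
  calc Real.sqrt 2 * bdist G w ≤ 1 - |a| - |b| := key1
    _ ≤ 1 - ‖w‖ := by linarith
    _ ≤ bdist (Metric.ball (0 : EuclideanSpace ℝ (Fin 2)) 1) w := hball
end

section
/- Let 0 < s < 1, let G₁ = {(x,y) ∈ ℝ² : |x|^s + |y|^s < 1} and G₂ = {(x,y) ∈ ℝ² : |x| + |y| < 1}. Then for every w ∈ G₁, δ_{G₂}(w) ≥ 2^{1/s − 1} · δ_{G₁}(w). -/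
open Set Metric

lemma aux_inter_frontier {α : Type*} [TopologicalSpace α] {s t : Set α}
    (hs : IsPreconnected s) (h1 : (s ∩ t).Nonempty) (h2 : (s \ t).Nonempty) :
    (s ∩ frontier t).Nonempty := by
  by_contra h
  rw [Set.not_nonempty_iff_eq_empty] at h
  have hfr : ∀ x ∈ s, x ∉ frontier t := by
    intro x hx hxf
    exact absurd (Set.mem_inter hx hxf) (h ▸ Set.notMem_empty x)
  have hsub : s ⊆ interior t ∪ (closure t)ᶜ := by
    intro x hx
    by_cases hc : x ∈ closure t
    · left
      by_contra hint
      exact hfr x hx ⟨hc, hint⟩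
    · right; exact hc
  obtain ⟨x, hxs, hxt⟩ := h1
  obtain ⟨y, hys, hyt⟩ := h2
  have hxint : x ∈ interior t := by
    by_contra hint
    exact hfr x hxs ⟨subset_closure hxt, hint⟩
  have hycl : y ∉ closure t := by
    intro hc
    exact hfr y hys ⟨hc, fun hint => hyt (interior_subset hint)⟩
  obtain ⟨z, hzs, hz⟩ := hs (interior t) (closure t)ᶜ isOpen_interior
    isClosed_closure.isOpen_compl hsub ⟨x, hxs, hxint⟩ ⟨y, hys, hycl⟩
  exact hz.2 (subset_closure (interior_subset hz.1))

lemma pow_bound (s : ℝ) (hs0 : 0 < s) (hs1 : s < 1) {a d : ℝ}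
    (ha : 0 ≤ a) (ha1 : a < 1) (hd : 0 ≤ d) (hda : d ≤ 1 - a) :
    a + d / 2 ≤ (a + (2:ℝ) ^ (-(1/s)) * d) ^ s := by
  have h2 : (0:ℝ) < 2 := by norm_num
  set c : ℝ := (2:ℝ) ^ (-(1/s)) with hc
  have hc0 : 0 < c := Real.rpow_pos_of_pos h2 _
  have hcs : c ^ s = 1/2 := by
    rw [hc, ← Real.rpow_mul h2.le]
    rw [show -(1/s) * s = (-1 : ℝ) by field_simp]
    rw [Real.rpow_neg_one]; norm_num
  have h1a : 0 < 1 - a := by linarith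
  set r : ℝ := d / (1 - a) with hr
  have hr0 : 0 ≤ r := div_nonneg hd h1a.le
  have hr1 : r ≤ 1 := (div_le_one h1a).2 hda
  have hrd : (1 - a) * r = d := by
    rw [hr]; field_simp
  have hrs : r ≤ r ^ s := by
    rcases eq_or_lt_of_le hr0 with h | h
    · rw [← h, Real.zero_rpow hs0.ne']
    · calc r = r ^ (1:ℝ) := (Real.rpow_one r).symm
        _ ≤ r ^ s := Real.rpow_le_rpow_of_exponent_ge h hr1 hs1.le
  have hconc := (Real.concaveOn_rpow hs0.le hs1.le).2
    (Set.mem_Ici.2 (zero_le_one)) (Set.mem_Ici.2 (mul_nonneg hr0 hc0.le))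
    ha (by linarith : (0:ℝ) ≤ 1 - a) (by ring)
  simp only [smul_eq_mul, Real.one_rpow] at hconc
  have hmr : (r * c) ^ s = r ^ s * (1/2) := by
    rw [Real.mul_rpow hr0 hc0.le, hcs]
  rw [hmr] at hconc
  have heq : a * 1 + (1 - a) * (r * c) = a + c * d := by
    rw [← hrd]; ring
  rw [heq] at hconc
  calc a + d / 2 = a * 1 + (1 - a) * (r * (1/2)) := by rw [← hrd]; ring
    _ ≤ a * 1 + (1 - a) * (r ^ s * (1/2)) := by nlinarith
    _ ≤ (a + c * d) ^ s := hconc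

lemma key_ineq (s : ℝ) (hs0 : 0 < s) (hs1 : s < 1) {a b : ℝ}
    (ha : 0 ≤ a) (hb : 0 ≤ b) (ha1 : a < 1) (hb1 : b < 1) (hm : a + b ≤ 1) :
    1 ≤ (a + (2:ℝ) ^ (-(1/s)) * (1 - a - b)) ^ s
      + (b + (2:ℝ) ^ (-(1/s)) * (1 - a - b)) ^ s := by
  have h1 := pow_bound s hs0 hs1 ha ha1 (d := 1 - a - b) (by linarith) (by linarith)
  have h2 := pow_bound s hs0 hs1 hb hb1 (d := 1 - a - b) (by linarith) (by linarith)
  linarith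

theorem stmt_19 (s : ℝ) (hs0 : 0 < s) (hs1 : s < 1)
    (w : EuclideanSpace ℝ (Fin 2))
    (hw : w ∈ {p : EuclideanSpace ℝ (Fin 2) | |p 0| ^ s + |p 1| ^ s < 1}) :
    (2 : ℝ) ^ (1 / s - 1) *
        bdist {p : EuclideanSpace ℝ (Fin 2) | |p 0| ^ s + |p 1| ^ s < 1} w ≤
      bdist {p : EuclideanSpace ℝ (Fin 2) | |p 0| + |p 1| < 1} w := by
  classical
  set G1 : Set (EuclideanSpace ℝ (Fin 2)) :=
    {p | |p 0| ^ s + |p 1| ^ s < 1} with hG1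
  set G2 : Set (EuclideanSpace ℝ (Fin 2)) :=
    {p | |p 0| + |p 1| < 1} with hG2
  have hws : |w 0| ^ s + |w 1| ^ s < 1 := hw
  set a := |w 0| with haeq
  set b := |w 1| with hbeq
  have ha0 : 0 ≤ a := abs_nonneg _
  have hb0 : 0 ≤ b := abs_nonneg _
  have hbs0 : 0 ≤ b ^ s := Real.rpow_nonneg hb0 _
  have has0 : 0 ≤ a ^ s := Real.rpow_nonneg ha0 _
  have ha1 : a < 1 := by
    by_contra hcon; push_neg at hcon
    have : (1:ℝ) ≤ a ^ s := by
      calc (1:ℝ) = 1 ^ s := (Real.one_rpow s).symm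
        _ ≤ a ^ s := Real.rpow_le_rpow zero_le_one hcon hs0.le
    linarith
  have hb1 : b < 1 := by
    by_contra hcon; push_neg at hcon
    have : (1:ℝ) ≤ b ^ s := by
      calc (1:ℝ) = 1 ^ s := (Real.one_rpow s).symm
        _ ≤ b ^ s := Real.rpow_le_rpow zero_le_one hcon hs0.le
    linarith
  have haa : a ≤ a ^ s := by
    rcases eq_or_lt_of_le ha0 with h | h
    · rw [← h, Real.zero_rpow hs0.ne']
    · calc a = a ^ (1:ℝ) := (Real.rpow_one a).symm
        _ ≤ a ^ s := Real.rpow_le_rpow_of_exponent_ge h ha1.le hs1.le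
  have hbb : b ≤ b ^ s := by
    rcases eq_or_lt_of_le hb0 with h | h
    · rw [← h, Real.zero_rpow hs0.ne']
    · calc b = b ^ (1:ℝ) := (Real.rpow_one b).symm
        _ ≤ b ^ s := Real.rpow_le_rpow_of_exponent_ge h hb1.le hs1.le
  have hm : a + b < 1 := by linarith
  set h : ℝ := (2:ℝ) ^ (-(1/s)) * (1 - a - b) with hh
  have hc0 : (0:ℝ) < (2:ℝ) ^ (-(1/s)) := Real.rpow_pos_of_pos (by norm_num) _
  have hhpos : 0 ≤ h := mul_nonneg hc0.le (by linarith)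
  set e0 : ℝ := if 0 ≤ w 0 then h else -h with he0
  set e1 : ℝ := if 0 ≤ w 1 then h else -h with he1
  set z : EuclideanSpace ℝ (Fin 2) :=
    (WithLp.equiv 2 (Fin 2 → ℝ)).symm ![w 0 + e0, w 1 + e1] with hzdef
  have hz0 : z 0 = w 0 + e0 := rfl
  have hz1 : z 1 = w 1 + e1 := rfl
  have habs0 : |z 0| = a + h := by
    rw [hz0, he0]
    split_ifs with hsgn
    · rw [abs_of_nonneg (by linarith), haeq, abs_of_nonneg hsgn]
    · push_neg at hsgn
      rw [abs_of_nonpos (by linarith), haeq, abs_of_neg hsgn]; ring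
  have habs1 : |z 1| = b + h := by
    rw [hz1, he1]
    split_ifs with hsgn
    · rw [abs_of_nonneg (by linarith), hbeq, abs_of_nonneg hsgn]
    · push_neg at hsgn
      rw [abs_of_nonpos (by linarith), hbeq, abs_of_neg hsgn]; ring
  have hzG : z ∉ G1 := by
    rw [hG1, Set.mem_setOf_eq, habs0, habs1, not_lt]
    have := key_ineq s hs0 hs1 ha0 hb0 ha1 hb1 hm.le
    calc (1:ℝ) ≤ (a + (2:ℝ) ^ (-(1/s)) * (1 - a - b)) ^ s
        + (b + (2:ℝ) ^ (-(1/s)) * (1 - a - b)) ^ s := this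
      _ = (a + h) ^ s + (b + h) ^ s := by rw [hh]
  -- distance from w to z
  have habse0 : |e0| = h := by
    rw [he0]; split_ifs
    · exact abs_of_nonneg hhpos
    · rw [abs_neg]; exact abs_of_nonneg hhpos
  have habse1 : |e1| = h := by
    rw [he1]; split_ifs
    · exact abs_of_nonneg hhpos
    · rw [abs_neg]; exact abs_of_nonneg hhpos
  have hdistwz : dist w z = Real.sqrt 2 * h := by
    rw [EuclideanSpace.dist_eq, Fin.sum_univ_two, hz0, hz1]
    have d0 : dist (w 0) (w 0 + e0) = h := by
      rw [Real.dist_eq, show w 0 - (w 0 + e0) = -e0 by ring, abs_neg, habse0]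
    have d1 : dist (w 1) (w 1 + e1) = h := by
      rw [Real.dist_eq, show w 1 - (w 1 + e1) = -e1 by ring, abs_neg, habse1]
    rw [d0, d1, show h ^ 2 + h ^ 2 = 2 * h ^ 2 by ring,
      Real.sqrt_mul (by norm_num), Real.sqrt_sq hhpos]
  -- bdist G1 w ≤ dist w z
  have hbd1 : bdist G1 w ≤ Real.sqrt 2 * h := by
    obtain ⟨y, hyseg, hyfr⟩ := aux_inter_frontier
      ((convex_segment w z).isPreconnected)
      ⟨w, left_mem_segment ℝ w z, hw⟩ ⟨z, right_mem_segment ℝ w z, hzG⟩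
    have hle : dist w y ≤ dist w z := by
      have := dist_add_dist_of_mem_segment hyseg
      have := dist_nonneg (x := y) (y := z)
      linarith
    calc bdist G1 w ≤ dist w y := Metric.infDist_le_dist_of_mem hyfr
      _ ≤ dist w z := hle
      _ = Real.sqrt 2 * h := hdistwz
  -- G2 open
  have hG2open : IsOpen G2 := by
    have hcont : Continuous fun p : EuclideanSpace ℝ (Fin 2) => |p 0| + |p 1| := by
      apply Continuous.add
      · exact (EuclideanSpace.proj (0 : Fin 2) : EuclideanSpace ℝ (Fin 2) →L[ℝ] ℝ).continuous.abs
      · exact (EuclideanSpace.proj (1 : Fin 2) : EuclideanSpace ℝ (Fin 2) →L[ℝ] ℝ).continuous.abs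
    exact isOpen_lt hcont continuous_const
  have hfr2 : ∀ y ∈ frontier G2, 1 ≤ |y 0| + |y 1| := by
    intro y hy
    have hynot : y ∉ G2 := by
      rw [hG2open.frontier_eq] at hy
      exact hy.2
    exact not_lt.1 hynot
  -- frontier G2 nonempty
  have hwG2 : w ∈ G2 := by
    rw [hG2, Set.mem_setOf_eq]; exact lt_of_le_of_lt (le_refl _) hm
  have hfr2ne : (frontier G2).Nonempty := by
    set z2 : EuclideanSpace ℝ (Fin 2) :=
      (WithLp.equiv 2 (Fin 2 → ℝ)).symm ![w 0 + 2, w 1] with hz2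
    have hz2not : z2 ∉ G2 := by
      rw [hG2, Set.mem_setOf_eq, not_lt]
      have h20 : z2 0 = w 0 + 2 := rfl
      have h21 : z2 1 = w 1 := rfl
      rw [h20, h21]
      have : (2:ℝ) - |w 0| ≤ |w 0 + 2| := by
        have habs := abs_add_le (w 0 + 2) (-(w 0))
        rw [show w 0 + 2 + -w 0 = (2:ℝ) by ring, abs_neg,
          show |(2:ℝ)| = 2 by norm_num] at habs
        linarith
      have hb0' : (0:ℝ) ≤ |w 1| := abs_nonneg _
      linarith
    obtain ⟨y, _, hyfr⟩ := aux_inter_frontier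
      ((convex_segment w z2).isPreconnected)
      ⟨w, left_mem_segment ℝ w z2, hwG2⟩ ⟨z2, right_mem_segment ℝ w z2, hz2not⟩
    exact ⟨y, hyfr⟩
  -- lower bound on bdist G2
  have hsqrt2 : (0:ℝ) < Real.sqrt 2 := Real.sqrt_pos.2 (by norm_num)
  have hlow : (1 - (a + b)) / Real.sqrt 2 ≤ bdist G2 w := by
    rw [bdist]
    by_contra hlt; push_neg at hlt
    obtain ⟨y, hy, hdy⟩ := (Metric.infDist_lt_iff hfr2ne).1 hlt
    have h1' : 1 - (a + b) ≤ |w 0 - y 0| + |w 1 - y 1| := by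
      have hy1 := hfr2 y hy
      have t0 : |y 0| - |w 0| ≤ |w 0 - y 0| := by
        rw [abs_sub_comm]; exact abs_sub_abs_le_abs_sub _ _
      have t1 : |y 1| - |w 1| ≤ |w 1 - y 1| := by
        rw [abs_sub_comm]; exact abs_sub_abs_le_abs_sub _ _
      rw [haeq, hbeq]; linarith
    have h2' : |w 0 - y 0| + |w 1 - y 1| ≤ Real.sqrt 2 * dist w y := by
      rw [EuclideanSpace.dist_eq, Fin.sum_univ_two]
      have hd0 : dist (w 0) (y 0) = |w 0 - y 0| := Real.dist_eq _ _
      have hd1 : dist (w 1) (y 1) = |w 1 - y 1| := Real.dist_eq _ _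
      rw [hd0, hd1]
      set u := |w 0 - y 0| with hu
      set v := |w 1 - y 1| with hv
      have hu0 : 0 ≤ u := abs_nonneg _
      have hv0 : 0 ≤ v := abs_nonneg _
      have hsq : (u + v) ^ 2 ≤ 2 * (u ^ 2 + v ^ 2) := by nlinarith [sq_nonneg (u - v)]
      calc u + v = Real.sqrt ((u + v) ^ 2) := (Real.sqrt_sq (by linarith)).symm
        _ ≤ Real.sqrt (2 * (u ^ 2 + v ^ 2)) := Real.sqrt_le_sqrt hsq
        _ = Real.sqrt 2 * Real.sqrt (u ^ 2 + v ^ 2) := Real.sqrt_mul (by norm_num) _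
    have : 1 - (a + b) ≤ Real.sqrt 2 * dist w y := le_trans h1' h2'
    have hcontr : Real.sqrt 2 * dist w y < Real.sqrt 2 * ((1 - (a + b)) / Real.sqrt 2) :=
      mul_lt_mul_of_pos_left hdy hsqrt2
    rw [mul_div_cancel₀ _ hsqrt2.ne'] at hcontr
    linarith
  -- final computation
  have hfactor : (2:ℝ) ^ (1/s - 1) * (Real.sqrt 2 * h) = (1 - (a + b)) / Real.sqrt 2 := by
    rw [hh]
    have hp : (2:ℝ) ^ (1/s - 1) * (2:ℝ) ^ (-(1/s)) = 1/2 := by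
      rw [← Real.rpow_add (by norm_num : (0:ℝ) < 2)]
      rw [show 1/s - 1 + -(1/s) = (-1:ℝ) by ring, Real.rpow_neg_one]
      norm_num
    have hsq2 : Real.sqrt 2 * Real.sqrt 2 = 2 := Real.mul_self_sqrt (by norm_num)
    rw [show (2:ℝ) ^ (1/s - 1) * (Real.sqrt 2 * ((2:ℝ) ^ (-(1/s)) * (1 - a - b)))
        = ((2:ℝ) ^ (1/s - 1) * (2:ℝ) ^ (-(1/s))) * (Real.sqrt 2 * (1 - a - b)) by ring, hp]
    rw [eq_div_iff hsqrt2.ne']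
    linear_combination ((1 - a - b)/2) * hsq2
  have hpos : (0:ℝ) ≤ (2:ℝ) ^ (1/s - 1) := (Real.rpow_pos_of_pos (by norm_num) _).le
  calc (2:ℝ) ^ (1/s - 1) * bdist G1 w
      ≤ (2:ℝ) ^ (1/s - 1) * (Real.sqrt 2 * h) := mul_le_mul_of_nonneg_left hbd1 hpos
    _ = (1 - (a + b)) / Real.sqrt 2 := hfactor
    _ ≤ bdist G2 w := hlow
end
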